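/- Let T be a bounded operator on H that has Toeplitz matrix with coefficient sequence c : ℤ → ℂ. Then: (i) |c(k)| ≤ ‖T‖/√(k+1) for every k ≥ 0 and |c(−k)| ≤ √(k+1)·‖T‖ for every k ≥ 0; (ii) for every z in the open unit disc 𝔻 the series Σ_{k≥1} c(k) z^k and Σ_{k≥0} c(−k) conj(z)^k are absolutely summable, so that φ(z) := Σ_{k≥1} c(k) z^k + Σ_{k≥0} c(−k) conj(z)^k is the sum of a holomorphic function and a conjugate-holomorphic function on 𝔻 (hence harmonic on 𝔻); (iii) Σ_{k≥1} k·|c(k)|² < ∞ (i.e. the holomorphic part z ↦ Σ_{k≥1} c(k) z^k belongs to the Dirichlet space 𝒟₀). -/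

import Mathlib

open scoped ComplexConjugate

local notation "⟪" x ", " y "⟫" => @inner ℂ _ _ x y

theorem statement6 {H : Type*} [NormedAddCommGroup H] [InnerProductSpace ℂ H]
    [CompleteSpace H]
    (e : ℕ → H)
    (horth : ∀ m n : ℕ, 1 ≤ m → 1 ≤ n → ⟪e m, e n⟫ = if m = n then (m : ℂ) else 0)
    (hdense : Dense (Submodule.span ℂ (e '' {n : ℕ | 1 ≤ n}) : Set H))
    (T : H →L[ℂ] H) (c : ℤ → ℂ)
    (hT : ∀ m n : ℕ, 1 ≤ m → 1 ≤ n → ⟪e m, T (e n)⟫ = (m : ℂ) * c ((m : ℤ) - n)) :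
    -- (i) coefficient bounds
    (∀ k : ℕ,
      ‖c k‖ ≤ ‖T‖ / Real.sqrt (k + 1) ∧ ‖c (-(k : ℤ))‖ ≤ Real.sqrt (k + 1) * ‖T‖) ∧
    -- (ii) absolute summability of the two series defining the symbol on the disc
    (∀ z ∈ Metric.ball (0 : ℂ) 1,
      Summable (fun k : ℕ => ‖c ((k : ℤ) + 1) * z ^ (k + 1)‖) ∧
      Summable (fun k : ℕ => ‖c (-(k : ℤ)) * (conj z) ^ k‖)) ∧
    -- (iii) the holomorphic part lies in the Dirichlet space
    Summable (fun k : ℕ => ((k : ℝ) + 1) * ‖c ((k : ℤ) + 1)‖ ^ 2) := by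
  -- norms of basis vectors
  have hnorm : ∀ n : ℕ, 1 ≤ n → ‖e n‖ = Real.sqrt n := by
    intro n hn
    have h := horth n n hn hn
    simp only [if_true, eq_self_iff_true] at h
    have h3 : (‖e n‖ : ℝ) ^ 2 = (n : ℝ) := by
      have h2 := @inner_self_eq_norm_sq ℂ H _ _ _ (e n)
      rw [h] at h2
      simpa using h2.symm
    rw [← h3, Real.sqrt_sq (norm_nonneg _)]
  -- inner product formula for positive coefficients
  have hck : ∀ k : ℕ, ⟪e (k + 1), T (e 1)⟫ = ((k : ℂ) + 1) * c k := by
    intro k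
    have := hT (k + 1) 1 (by omega) le_rfl
    have hc : ((k + 1 : ℕ) : ℤ) - (1 : ℕ) = (k : ℤ) := by push_cast; ring
    rw [hc] at this
    rw [this]; push_cast; ring
  have hcm : ∀ k : ℕ, ⟪e 1, T (e (k + 1))⟫ = c (-(k : ℤ)) := by
    intro k
    have := hT 1 (k + 1) le_rfl (by omega)
    have hc : ((1 : ℕ) : ℤ) - ((k + 1 : ℕ) : ℤ) = -(k : ℤ) := by push_cast; ring
    rw [hc] at this
    rw [this]; push_cast; ring
  have hT1 : ∀ k : ℕ, ‖T (e (k + 1))‖ ≤ Real.sqrt (k + 1) * ‖T‖ := by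
    intro k
    calc ‖T (e (k + 1))‖ ≤ ‖T‖ * ‖e (k + 1)‖ := T.le_opNorm _
      _ = Real.sqrt (k + 1) * ‖T‖ := by
          rw [hnorm (k + 1) (by omega)]; push_cast; ring
  have he1 : ‖e 1‖ = 1 := by rw [hnorm 1 le_rfl]; simp
  have hs : ∀ k : ℕ, (0 : ℝ) < Real.sqrt (k + 1) :=
    fun k => Real.sqrt_pos.2 (by positivity)
  have hsq : ∀ k : ℕ, Real.sqrt (k + 1) * Real.sqrt (k + 1) = (k : ℝ) + 1 :=
    fun k => Real.mul_self_sqrt (by positivity)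
  -- key bound for positive coefficients
  have hb1 : ∀ k : ℕ, ((k : ℝ) + 1) * ‖c k‖ ≤ Real.sqrt (k + 1) * ‖T‖ := by
    intro k
    have h1 : ‖⟪e (k + 1), T (e 1)⟫‖ ≤ ‖e (k + 1)‖ * ‖T (e 1)‖ := norm_inner_le_norm _ _
    rw [hck k] at h1
    have h2 : ‖((k : ℂ) + 1) * c k‖ = ((k : ℝ) + 1) * ‖c k‖ := by
      rw [norm_mul]
      congr 1
      have : ((k : ℂ) + 1) = ((((k : ℝ) + 1) : ℝ) : ℂ) := by push_cast; ring
      rw [this, Complex.norm_real, Real.norm_of_nonneg (by positivity)]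
    rw [h2] at h1
    have h3 : ‖e (k + 1)‖ = Real.sqrt (k + 1) := by
      rw [hnorm (k + 1) (by omega)]; push_cast; ring_nf
    have h4 : ‖T (e 1)‖ ≤ ‖T‖ := by
      calc ‖T (e 1)‖ ≤ ‖T‖ * ‖e 1‖ := T.le_opNorm _
        _ = ‖T‖ := by rw [he1, mul_one]
    calc ((k : ℝ) + 1) * ‖c k‖ ≤ ‖e (k + 1)‖ * ‖T (e 1)‖ := h1
      _ ≤ Real.sqrt (k + 1) * ‖T‖ := by
          rw [h3]; exact mul_le_mul_of_nonneg_left h4 (le_of_lt (hs k))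
  have hbpos : ∀ k : ℕ, ‖c k‖ ≤ ‖T‖ / Real.sqrt (k + 1) := by
    intro k
    rw [le_div_iff₀ (hs k)]
    have := hb1 k
    nlinarith [hsq k, hs k, norm_nonneg (c (k : ℤ)), norm_nonneg T]
  have hbneg : ∀ k : ℕ, ‖c (-(k : ℤ))‖ ≤ Real.sqrt (k + 1) * ‖T‖ := by
    intro k
    have h1 : ‖⟪e 1, T (e (k + 1))⟫‖ ≤ ‖e 1‖ * ‖T (e (k + 1))‖ := norm_inner_le_norm _ _
    rw [hcm k, he1, one_mul] at h1
    exact h1.trans (hT1 k)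
  have hTnn : (0 : ℝ) ≤ ‖T‖ := norm_nonneg T
  refine ⟨fun k => ⟨hbpos k, hbneg k⟩, ?_, ?_⟩
  · -- (ii)
    intro z hz
    rw [Metric.mem_ball, dist_zero_right] at hz
    constructor
    · have hg : Summable (fun k : ℕ => ‖T‖ * ‖z‖ ^ (k + 1)) := by
        have : Summable (fun k : ℕ => ‖z‖ ^ (k + 1)) :=
          ((summable_geometric_of_lt_one (norm_nonneg z) hz).mul_left ‖z‖).congr
            (fun k => by ring)
        exact this.mul_left ‖T‖
      refine Summable.of_nonneg_of_le (fun k => norm_nonneg _) ?_ hg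
      · intro k
        rw [norm_mul, norm_pow]
        apply mul_le_mul _ le_rfl (by positivity) hTnn
        calc ‖c ((k : ℤ) + 1)‖ = ‖c ((k + 1 : ℕ) : ℤ)‖ := by push_cast; ring_nf
          _ ≤ ‖T‖ / Real.sqrt ((k + 1 : ℕ) + 1) := hbpos (k + 1)
          _ ≤ ‖T‖ := by
              rw [div_le_iff₀ (hs (k + 1))]
              nlinarith [hs (k + 1), hsq (k + 1), hTnn,
                Nat.cast_nonneg (α := ℝ) (k + 1)]
    · have hg : Summable (fun k : ℕ => (((k : ℝ) + 1) * ‖T‖) * ‖z‖ ^ k) := by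
        have h1 : Summable (fun k : ℕ => (k : ℝ) * ‖z‖ ^ k) := by
          simpa using summable_pow_mul_geometric_of_norm_lt_one 1
            (show ‖(‖z‖ : ℝ)‖ < 1 by rwa [Real.norm_of_nonneg (norm_nonneg z)])
        have h2 : Summable (fun k : ℕ => ‖z‖ ^ k) :=
          summable_geometric_of_lt_one (norm_nonneg z) hz
        have h3 : Summable (fun k : ℕ => ((k : ℝ) + 1) * ‖z‖ ^ k) := by
          have := h1.add h2
          exact this.congr (fun k => by ring)
        exact (h3.mul_right ‖T‖).congr (fun k => by ring)
      refine Summable.of_nonneg_of_le (fun k => norm_nonneg _) ?_ hg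
      · intro k
        rw [norm_mul, norm_pow, RCLike.norm_conj]
        apply mul_le_mul _ le_rfl (by positivity) (by positivity)
        calc ‖c (-(k : ℤ))‖ ≤ Real.sqrt (k + 1) * ‖T‖ := hbneg k
          _ ≤ ((k : ℝ) + 1) * ‖T‖ := by
              apply mul_le_mul_of_nonneg_right _ hTnn
              calc Real.sqrt ((k : ℝ) + 1) ≤ Real.sqrt (((k : ℝ) + 1) ^ 2) := by
                    apply Real.sqrt_le_sqrt; nlinarith [Nat.cast_nonneg (α := ℝ) k]
                _ = (k : ℝ) + 1 := Real.sqrt_sq (by positivity)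
  · -- (iii) via Bessel's inequality
    set v : ℕ → H := fun k => (((Real.sqrt (k + 1) : ℝ) : ℂ))⁻¹ • e (k + 1) with hv
    have hortho : Orthonormal ℂ v := by
      rw [orthonormal_iff_ite]
      intro i j
      simp only [hv, inner_smul_left, inner_smul_right, map_inv₀, Complex.conj_ofReal]
      rw [horth (i + 1) (j + 1) (by omega) (by omega)]
      by_cases h : i = j
      · subst h
        simp only [if_pos rfl]
        have hne : ((Real.sqrt (i + 1) : ℝ) : ℂ) ≠ 0 := by
          exact_mod_cast (hs i).ne'
        field_simp
        rw [if_pos trivial, if_pos trivial, sq, ← Complex.ofReal_mul, hsq i]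
        push_cast
        ring
      · simp [h, fun hij : i + 1 = j + 1 => h (by omega)]
    have hbessel : Summable fun k : ℕ => ‖⟪v k, T (e 1)⟫‖ ^ 2 :=
      Orthonormal.inner_products_summable (T (e 1)) hortho
    have hval : ∀ k : ℕ, ‖⟪v k, T (e 1)⟫‖ ^ 2 = ((k : ℝ) + 1) * ‖c k‖ ^ 2 := by
      intro k
      simp only [hv, inner_smul_left, map_inv₀, Complex.conj_ofReal, hck k]
      rw [norm_mul, norm_inv, Complex.norm_real,
        Real.norm_of_nonneg (le_of_lt (hs k))]
      have h2 : ‖((k : ℂ) + 1)‖ = (k : ℝ) + 1 := by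
        rw [show ((k : ℂ) + 1) = ((((k : ℝ) + 1) : ℝ) : ℂ) by push_cast; ring,
          Complex.norm_real, Real.norm_of_nonneg (by positivity)]
      rw [norm_mul, h2]
      rw [mul_pow, mul_pow, inv_pow]
      rw [show Real.sqrt ((k : ℝ) + 1) ^ 2 = (k : ℝ) + 1 by
        rw [sq, hsq k]]
      field_simp
    have hsum : Summable fun k : ℕ => ((k : ℝ) + 1) * ‖c k‖ ^ 2 :=
      hbessel.congr hval
    -- shift index
    have hshift : Summable fun k : ℕ => ((k : ℝ) + 2) * ‖c ((k : ℤ) + 1)‖ ^ 2 := by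
      have := (summable_nat_add_iff 1).2 hsum
      apply this.congr
      intro k
      push_cast
      ring_nf
    refine Summable.of_nonneg_of_le (fun k => by positivity) ?_ hshift
    intro k
    apply mul_le_mul_of_nonneg_right _ (by positivity)
    linarith
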